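/- There exists an absolute constant κ₀ > 0 such that the following holds for all 0 < κ < κ₀. Let G be an abelian group and let U be a finite nonempty subset of G whose additive energy satisfies E(U) ≥ (1 − 40·κ^{1/6})·|U|³. Then there exist a finite subgroup H of G and an element z ∈ G such that |U △ (H − z)| < 1000·κ^{1/12}·|U|. -/

import Mathlib

open Finset

/-- The additive energy of a set `U`: the number of quadruples
`(u₁,u₂,u₃,u₄) ∈ U⁴` with `u₁ + u₂ = u₃ + u₄`. -/
noncomputable def addEnergySet {G : Type*} [AddCommGroup G] (U : Set G) : ℕ :=
  Nat.card {p : (G × G) × G × G // p.1.1 ∈ U ∧ p.1.2 ∈ U ∧ p.2.1 ∈ U ∧ p.2.2 ∈ U ∧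
    p.1.1 + p.1.2 = p.2.1 + p.2.2}

open scoped Classical in
noncomputable def rrep {G : Type*} [AddCommGroup G] (A : Finset G) (d : G) : ℕ :=
  (A.filter (fun a => a - d ∈ A)).card

section rr
variable {G : Type*} [AddCommGroup G] (A : Finset G)
open scoped Classical

lemma rrep_pair (d : G) :
    rrep A d = ((A ×ˢ A).filter (fun p => p.1 - p.2 = d)).card := by
  classical
  unfold rrep
  apply Finset.card_nbij' (fun a => (a, a - d)) (fun p => p.1)
  · intro a ha
    simp only [mem_filter, mem_product, mem_coe] at ha ⊢
    simp [ha.1, ha.2]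
  · intro p hp
    simp only [mem_filter, mem_product, mem_coe] at hp ⊢
    obtain ⟨⟨h1, h2⟩, h3⟩ := hp
    refine ⟨h1, ?_⟩
    rw [← h3]; simpa using h2
  · intro a _; rfl
  · intro p hp
    simp only [mem_filter, mem_product, mem_coe] at hp
    have : p.1 - d = p.2 := by rw [← hp.2]; abel
    simp [Prod.ext_iff, this]

lemma sum_rrep_le (t : Finset G) : ∑ d ∈ t, rrep A d ≤ A.card ^ 2 := by
  classical
  have key : ∑ d ∈ t, rrep A d
      = ((A ×ˢ A).filter (fun p => p.1 - p.2 ∈ t)).card := by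
    rw [Finset.card_eq_sum_card_fiberwise
      (s := (A ×ˢ A).filter (fun p => p.1 - p.2 ∈ t)) (f := fun p : G × G => p.1 - p.2) (t := t)
      (fun x hx => (mem_filter.mp hx).2)]
    apply Finset.sum_congr rfl
    intro d hd
    rw [rrep_pair]
    congr 1
    ext p
    simp only [mem_filter, mem_product]
    constructor
    · rintro ⟨h1, h3⟩; exact ⟨⟨h1, by rw [h3]; exact hd⟩, h3⟩
    · rintro ⟨⟨h1, _⟩, h4⟩; exact ⟨h1, h4⟩
  rw [key, sq, ← Finset.card_product]
  exact card_le_card (filter_subset _ _)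

lemma energy_eq : addEnergySet (↑A : Set G) = ∑ p ∈ A ×ˢ A, rrep A (p.1 - p.2) := by
  classical
  set F : Finset ((G × G) × G × G) :=
    ((A ×ˢ A) ×ˢ (A ×ˢ A)).filter (fun p => p.1.1 + p.1.2 = p.2.1 + p.2.2) with hF
  have hset : {p : (G × G) × G × G | p.1.1 ∈ (↑A : Set G) ∧ p.1.2 ∈ (↑A : Set G) ∧
      p.2.1 ∈ (↑A : Set G) ∧ p.2.2 ∈ (↑A : Set G) ∧ p.1.1 + p.1.2 = p.2.1 + p.2.2}
      = ↑F := by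
    ext p
    simp only [hF, Set.mem_setOf_eq, coe_filter, mem_product, Set.mem_setOf_eq, mem_coe]
    tauto
  have h1 : addEnergySet (↑A : Set G) = F.card := by
    unfold addEnergySet
    rw [← Set.ncard_coe_finset, ← Nat.card_coe_set_eq, ← hset]
    rfl
  rw [h1]
  rw [Finset.card_eq_sum_card_fiberwise
    (f := fun p : (G × G) × G × G => (p.1.1, p.2.1)) (t := A ×ˢ A)
    (by
      intro p hp
      simp only [hF, mem_filter, mem_product, mem_coe] at hp
      simp only [mem_product, mem_coe]
      exact ⟨hp.1.1.1, hp.1.2.1⟩)]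
  apply Finset.sum_congr rfl
  intro x hx
  simp only [mem_product] at hx
  unfold rrep
  apply Finset.card_nbij' (fun p => p.2.2)
    (fun u => ((x.1, x.2 + u - x.1), (x.2, u)))
  · intro p hp
    simp only [hF, mem_filter, mem_product, mem_coe] at hp
    obtain ⟨⟨⟨⟨ha1, ha2⟩, hb1, hb2⟩, heq⟩, hfst⟩ := hp
    have h1 : p.1.1 = x.1 := by rw [← hfst]
    have h2 : p.2.1 = x.2 := by rw [← hfst]
    simp only [mem_filter, mem_coe]
    refine ⟨hb2, ?_⟩
    have h3 : p.2.2 - (x.1 - x.2) = p.1.2 := by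
      rw [← h1, ← h2]
      linear_combination (norm := abel) -heq
    rw [h3]; exact ha2
  · intro u hu
    simp only [mem_filter, mem_coe] at hu
    simp only [hF, mem_filter, mem_product, mem_coe]
    refine ⟨⟨⟨⟨hx.1, ?_⟩, hx.2, hu.1⟩, by abel⟩, by simp⟩
    have : x.2 + u - x.1 = u - (x.1 - x.2) := by abel
    rw [this]; exact hu.2
  · intro p hp
    simp only [hF, mem_filter, mem_product, mem_coe] at hp
    obtain ⟨⟨⟨⟨ha1, ha2⟩, hb1, hb2⟩, heq⟩, hfst⟩ := hp
    have h1 : p.1.1 = x.1 := by rw [← hfst]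
    have h2 : p.2.1 = x.2 := by rw [← hfst]
    have h3 : x.2 + p.2.2 - x.1 = p.1.2 := by
      rw [← h1, ← h2]; linear_combination (norm := abel) -heq
    ext <;> simp [h1, h2, h3]
  · intro u _; rfl
end rr

section aux
variable {G : Type*} [AddCommGroup G] (A : Finset G)
open scoped Classical

lemma rrep_le_card (d : G) : rrep A d ≤ A.card :=
  card_le_card (filter_subset _ _)

lemma rrep_neg (d : G) : rrep A (-d) = rrep A d := by
  unfold rrep
  apply Finset.card_nbij' (fun a => a + d) (fun a => a - d)
  · intro a ha
    simp only [mem_filter, sub_neg_eq_add, mem_coe] at ha ⊢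
    simp [ha.1, ha.2]
  · intro a ha
    simp only [mem_filter, sub_neg_eq_add, mem_coe] at ha ⊢
    simp [ha.1, ha.2, sub_add_cancel]
  · intro a _; simp
  · intro a _; simp

lemma rrep_add_rrep_le (d₁ d₂ : G) :
    rrep A d₁ + rrep A d₂ ≤ rrep A (d₁ - d₂) + A.card := by
  set S₁ := A.filter (fun a => a - d₁ ∈ A) with hS₁
  set S₂ := A.filter (fun a => a - d₂ ∈ A) with hS₂
  have h1 : rrep A d₁ + rrep A d₂ = (S₁ ∪ S₂).card + (S₁ ∩ S₂).card :=
    (card_union_add_card_inter _ _).symm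
  have h2 : (S₁ ∪ S₂).card ≤ A.card :=
    card_le_card (union_subset (filter_subset _ _) (filter_subset _ _))
  have h3 : (S₁ ∩ S₂).card ≤ rrep A (d₁ - d₂) := by
    unfold rrep
    apply Finset.card_le_card_of_injOn (fun a => a - d₂)
    · intro a ha
      simp only [mem_inter, hS₁, hS₂, mem_filter, mem_coe] at ha
      simp only [mem_filter, mem_coe]
      refine ⟨ha.2.2, ?_⟩
      have : a - d₂ - (d₁ - d₂) = a - d₁ := by abel
      rw [this]; exact ha.1.2
    · intro a _ b _ h
      simpa using h
  omega
end aux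

set_option maxHeartbeats 2000000 in
theorem stmt3 :
    ∃ κ₀ : ℝ, 0 < κ₀ ∧
    ∀ (G : Type) [AddCommGroup G] (κ : ℝ) (U : Set G),
      0 < κ → κ < κ₀ → U.Finite → U.Nonempty →
      (1 - 40 * κ ^ ((1 : ℝ) / 6)) * (U.ncard : ℝ) ^ 3 ≤ (addEnergySet U : ℝ) →
      ∃ (H : AddSubgroup G) (z : G), (H : Set G).Finite ∧
        ((symmDiff U ((fun h => h - z) '' (H : Set G))).ncard : ℝ)
          < 1000 * κ ^ ((1 : ℝ) / 12) * (U.ncard : ℝ) := by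
  classical
  refine ⟨(1/1000 : ℝ)^(12 : ℕ), by positivity, ?_⟩
  intro G _ κ U hκ hκ₀ hUfin hUne hE
  classical
  set A : Finset G := hUfin.toFinset with hA
  have hUA : U = ↑A := (Set.Finite.coe_toFinset hUfin).symm
  have hAne : A.Nonempty := (Set.Finite.toFinset_nonempty hUfin).mpr hUne
  set n : ℝ := (A.card : ℝ) with hn
  have hn1 : (1:ℝ) ≤ n := by
    have h : 1 ≤ A.card := hAne.card_pos
    rw [hn]; exact_mod_cast h
  have hnpos : (0:ℝ) < n := lt_of_lt_of_le one_pos hn1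
  set ε : ℝ := 7 * κ ^ ((1:ℝ)/12) with hε
  have hκ12pos : 0 < κ ^ ((1:ℝ)/12) := Real.rpow_pos_of_pos hκ _
  have hεpos : 0 < ε := by positivity
  have hκsmall : κ ^ ((1:ℝ)/12) < 1/1000 := by
    calc κ ^ ((1:ℝ)/12) < ((1/1000 : ℝ)^(12:ℕ)) ^ ((1:ℝ)/12) :=
          Real.rpow_lt_rpow (le_of_lt hκ) hκ₀ (by norm_num)
      _ = 1/1000 := by
          rw [← Real.rpow_natCast (1/1000 : ℝ) 12, ← Real.rpow_mul (by norm_num)]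
          norm_num
  have hε100 : ε ≤ 1/100 := by rw [hε]; nlinarith
  have hδε : 40 * κ ^ ((1:ℝ)/6) ≤ ε^2 := by
    have h6 : κ ^ ((1:ℝ)/6) = (κ ^ ((1:ℝ)/12))^2 := by
      rw [← Real.rpow_natCast (κ ^ ((1:ℝ)/12)) 2, ← Real.rpow_mul hκ.le]
      norm_num
    rw [h6, hε]
    nlinarith [sq_nonneg (κ ^ ((1:ℝ)/12))]
  have hUn : (U.ncard : ℝ) = n := by rw [hUA, Set.ncard_coe_finset]
  -- energy lower bound in terms of rrep
  have hE' : (1 - ε^2) * n^3 ≤ ∑ p ∈ A ×ˢ A, (rrep A (p.1 - p.2) : ℝ) := by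
    have h1 : ((addEnergySet U : ℕ) : ℝ) = ∑ p ∈ A ×ˢ A, (rrep A (p.1 - p.2) : ℝ) := by
      rw [hUA, energy_eq]
      push_cast
      rfl
    have h2 : (1 - ε^2) * n^3 ≤ (1 - 40 * κ ^ ((1:ℝ)/6)) * n^3 := by
      have : (0:ℝ) ≤ n^3 := pow_nonneg hnpos.le 3
      nlinarith
    rw [← h1]
    calc (1 - ε^2) * n^3 ≤ (1 - 40 * κ ^ ((1:ℝ)/6)) * n^3 := h2
      _ ≤ _ := by rw [← hUn] at *; exact hE
  
  -- Step 1: bad pairs are few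
  set Bad : Finset (G × G) :=
    (A ×ˢ A).filter (fun x => (rrep A (x.1 - x.2) : ℝ) ≤ (1 - ε) * n) with hBadDef
  have hrle : ∀ d : G, ((rrep A d : ℕ) : ℝ) ≤ n := by
    intro d
    rw [hn]
    exact_mod_cast rrep_le_card A d
  have hsumub : ∑ p ∈ A ×ˢ A, (n - (rrep A (p.1 - p.2) : ℝ)) ≤ ε^2 * n^3 := by
    rw [Finset.sum_sub_distrib]
    have hconst : ∑ _p ∈ A ×ˢ A, n = n^3 := by
      rw [Finset.sum_const, Finset.card_product, nsmul_eq_mul]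
      push_cast
      rw [← hn]
      ring
    rw [hconst]
    linarith [hE']
  have hBadn : (Bad.card : ℝ) ≤ ε * n^2 := by
    have h1 : ∀ x ∈ Bad, ε * n ≤ n - (rrep A (x.1 - x.2) : ℝ) := by
      intro x hx
      have h := (mem_filter.mp hx).2
      nlinarith
    have h2 := Finset.card_nsmul_le_sum Bad _ (ε * n) h1
    rw [nsmul_eq_mul] at h2
    have h3 : ∑ x ∈ Bad, (n - (rrep A (x.1 - x.2) : ℝ))
        ≤ ∑ p ∈ A ×ˢ A, (n - (rrep A (p.1 - p.2) : ℝ)) := by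
      apply Finset.sum_le_sum_of_subset_of_nonneg (filter_subset _ _)
      intro p hp _
      linarith [hrle (p.1 - p.2)]
    have hpos : (0:ℝ) < ε * n := mul_pos hεpos hnpos
    refine le_of_mul_le_mul_right ?_ hpos
    calc (Bad.card : ℝ) * (ε * n) ≤ ε^2 * n^3 := by linarith
      _ = ε * n^2 * (ε * n) := by ring
  -- Step 2: vertices with few bad partners
  set badOf : G → ℕ :=
    fun a => (A.filter (fun b => (rrep A (a - b) : ℝ) ≤ (1 - ε) * n)).card with hbadOfDef
  have hbadsum : ∑ a ∈ A, badOf a = Bad.card := by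
    rw [Finset.card_eq_sum_card_fiberwise (f := Prod.fst) (t := A)
      (fun x hx => (mem_product.mp (mem_filter.mp hx).1).1)]
    apply Finset.sum_congr rfl
    intro a ha
    apply Finset.card_nbij' (fun b => (a, b)) (fun p => p.2)
    · intro b hb
      simp only [mem_filter, mem_coe] at hb
      simp only [hBadDef, mem_filter, mem_product, mem_coe]
      exact ⟨⟨⟨ha, hb.1⟩, hb.2⟩, trivial⟩
    · intro p hp
      simp only [hBadDef, mem_filter, mem_product, mem_coe] at hp
      obtain ⟨⟨⟨h1, h2⟩, h3⟩, h4⟩ := hp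
      simp only [mem_filter, mem_coe]
      rw [← h4]
      exact ⟨h2, h3⟩
    · intro b _
      rfl
    · intro p hp
      simp only [hBadDef, mem_filter, mem_product, mem_coe] at hp
      exact Prod.ext_iff.mpr ⟨hp.2.symm, rfl⟩
  set A' : Finset G := A.filter (fun a => (badOf a : ℝ) ≤ n/10) with hA'def
  have hA'sub : A' ⊆ A := filter_subset _ _
  have hrem : ((A \ A').card : ℝ) ≤ 10 * ε * n := by
    have h1 : ∀ a ∈ A \ A', n/10 ≤ ((badOf a : ℕ) : ℝ) := by
      intro a ha
      rw [mem_sdiff, hA'def, mem_filter] at ha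
      have h2 := ha.2
      push_neg at h2
      exact (h2 ha.1).le
    have h2 := Finset.card_nsmul_le_sum (A \ A') (fun a => ((badOf a : ℕ):ℝ)) (n/10) h1
    rw [nsmul_eq_mul] at h2
    have h3 : ∑ a ∈ A \ A', ((badOf a : ℕ):ℝ) ≤ ∑ a ∈ A, ((badOf a : ℕ):ℝ) :=
      Finset.sum_le_sum_of_subset_of_nonneg sdiff_subset (fun _ _ _ => Nat.cast_nonneg _)
    have h4 : ∑ a ∈ A, ((badOf a : ℕ):ℝ) = (Bad.card : ℝ) := by
      rw [← Nat.cast_sum, hbadsum]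
    have hpos : (0:ℝ) < n/10 := by linarith
    refine le_of_mul_le_mul_right ?_ hpos
    calc ((A \ A').card : ℝ) * (n/10) ≤ ε * n^2 := by linarith
      _ = 10 * ε * n * (n/10) := by ring
  have hA'card : n - 10*ε*n ≤ (A'.card : ℝ) := by
    have h := Finset.card_sdiff_add_card_eq_card hA'sub
    have h' : ((A \ A').card : ℝ) + (A'.card : ℝ) = n := by
      rw [hn]
      exact_mod_cast h
    linarith
  have hA'ne : A'.Nonempty := by
    rw [← Finset.card_pos]
    have : (0:ℝ) < (A'.card : ℝ) := by nlinarith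
    exact_mod_cast this
  -- Step 3: pairwise popular differences within A'
  have hgood : ∀ a ∈ A',
      n - n/10 ≤ ((A.filter (fun b => ¬ ((rrep A (a - b) : ℝ) ≤ (1-ε)*n))).card : ℝ) := by
    intro a ha
    have hnot : A.filter (fun b => ¬ ((rrep A (a - b) : ℝ) ≤ (1-ε)*n))
        = A \ (A.filter (fun b => (rrep A (a - b) : ℝ) ≤ (1-ε)*n)) :=
      Finset.filter_not _ _
    have hle : badOf a ≤ A.card := card_le_card (filter_subset _ _)
    have hcs := Finset.card_sdiff_of_subset
      (filter_subset (fun b => (rrep A (a - b) : ℝ) ≤ (1-ε)*n) A)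
    have ha' : ((badOf a : ℕ):ℝ) ≤ n/10 := (mem_filter.mp ha).2
    have h' : ((A.filter (fun b => ¬ ((rrep A (a - b) : ℝ) ≤ (1-ε)*n))).card : ℝ)
        = n - ((badOf a : ℕ):ℝ) := by
      rw [hnot, hcs, hn]
      have : badOf a = (A.filter (fun b => (rrep A (a - b) : ℝ) ≤ (1-ε)*n)).card := rfl
      rw [← this]
      exact Nat.cast_sub hle
    linarith
  have hkey : ∀ a₁ ∈ A', ∀ a₂ ∈ A', (1 - 2*ε) * n ≤ (rrep A (a₁ - a₂) : ℝ) := by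
    intro a₁ h₁ a₂ h₂
    set G₁ := A.filter (fun b => ¬ ((rrep A (a₁ - b) : ℝ) ≤ (1-ε)*n)) with hG₁
    set G₂ := A.filter (fun b => ¬ ((rrep A (a₂ - b) : ℝ) ≤ (1-ε)*n)) with hG₂
    have hc₁ := hgood a₁ h₁
    have hc₂ := hgood a₂ h₂
    have hinter : (G₁ ∩ G₂).Nonempty := by
      rw [← Finset.card_pos]
      have h := card_union_add_card_inter G₁ G₂
      have hu : (G₁ ∪ G₂).card ≤ A.card :=
        card_le_card (union_subset (filter_subset _ _) (filter_subset _ _))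
      have h' : ((G₁ ∪ G₂).card:ℝ) + ((G₁ ∩ G₂).card:ℝ) = (G₁.card:ℝ) + (G₂.card:ℝ) := by
        exact_mod_cast h
      have hu' : ((G₁ ∪ G₂).card:ℝ) ≤ n := by
        rw [hn]; exact_mod_cast hu
      have hpos : (0:ℝ) < ((G₁ ∩ G₂).card:ℝ) := by linarith
      exact_mod_cast hpos
    obtain ⟨b, hb⟩ := hinter
    rw [mem_inter] at hb
    have hb₁ : (1-ε)*n < (rrep A (a₁ - b) : ℝ) := lt_of_not_ge (mem_filter.mp hb.1).2
    have hb₂ : (1-ε)*n < (rrep A (a₂ - b) : ℝ) := lt_of_not_ge (mem_filter.mp hb.2).2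
    have h := rrep_add_rrep_le A (a₁ - b) (a₂ - b)
    have heq : a₁ - b - (a₂ - b) = a₁ - a₂ := by abel
    rw [heq] at h
    have h' : (rrep A (a₁-b) : ℝ) + (rrep A (a₂-b):ℝ) ≤ (rrep A (a₁-a₂):ℝ) + n := by
      rw [hn]; exact_mod_cast h
    linarith
  -- Step 4: the difference set of A'
  set D : Finset G := (A' ×ˢ A').image (fun p => p.1 - p.2) with hDdef
  have hDr : ∀ d ∈ D, (1-2*ε)*n ≤ (rrep A d : ℝ) := by
    intro d hd
    obtain ⟨p, hp, rfl⟩ := mem_image.mp hd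
    rw [mem_product] at hp
    exact hkey _ hp.1 _ hp.2
  have hDcard : (D.card : ℝ) ≤ (1 + 4*ε) * n := by
    have h1 := sum_rrep_le A D
    have h2 := Finset.card_nsmul_le_sum D (fun d => (rrep A d : ℝ)) ((1-2*ε)*n) hDr
    rw [nsmul_eq_mul] at h2
    have h3 : ∑ d ∈ D, (rrep A d : ℝ) ≤ n^2 := by
      have h4 : ((∑ d ∈ D, rrep A d : ℕ):ℝ) ≤ ((A.card^2 : ℕ):ℝ) := by exact_mod_cast h1
      rw [Nat.cast_sum] at h4
      calc ∑ d ∈ D, (rrep A d : ℝ) ≤ ((A.card^2 : ℕ):ℝ) := h4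
        _ = n^2 := by rw [hn]; push_cast; ring
    have hfac : (0:ℝ) < (1-2*ε)*n := by nlinarith
    refine le_of_mul_le_mul_right ?_ hfac
    calc (D.card:ℝ) * ((1-2*ε)*n) ≤ n^2 := by linarith
      _ ≤ (1+4*ε)*n * ((1-2*ε)*n) := by
          have hh : (0:ℝ) ≤ ε * (1 - 4*ε) * n^2 :=
            mul_nonneg (mul_nonneg hεpos.le (by linarith)) (sq_nonneg n)
          nlinarith [sq_nonneg n]
  obtain ⟨a₀, ha₀⟩ := hA'ne
  have hD0 : (0:G) ∈ D := mem_image.mpr ⟨(a₀,a₀), mem_product.mpr ⟨ha₀, ha₀⟩, sub_self a₀⟩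
  have hDneg : ∀ d ∈ D, -d ∈ D := by
    intro d hd
    obtain ⟨p, hp, rfl⟩ := mem_image.mp hd
    rw [mem_product] at hp
    exact mem_image.mpr ⟨(p.2, p.1), mem_product.mpr ⟨hp.2, hp.1⟩, by simp [neg_sub]⟩
  have hSd : ∀ d ∈ D, (1 - 22*ε)*n ≤ ((A'.filter (fun a => a - d ∈ A')).card : ℝ) := by
    intro d hd
    set S := A'.filter (fun a => a - d ∈ A') with hSdef
    set T := A.filter (fun a => a - d ∈ A) with hTdef
    have hST : S ⊆ T := by
      intro a haS
      rw [hSdef, mem_filter] at haS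
      rw [hTdef, mem_filter]
      exact ⟨hA'sub haS.1, hA'sub haS.2⟩
    have hTcard : T.card = rrep A d := rfl
    have hTS : (T \ S).card ≤ 2 * (A \ A').card := by
      have hsub : T \ S ⊆ (T.filter (fun a => a ∉ A')) ∪ (T.filter (fun a => a - d ∉ A')) := by
        intro a ha
        simp only [hSdef, hTdef, mem_sdiff, mem_union, mem_filter] at ha ⊢
        tauto
      have h1 : (T.filter (fun a => a ∉ A')).card ≤ (A \ A').card := by
        apply card_le_card
        intro a ha
        simp only [hTdef, mem_filter] at ha
        simp only [mem_sdiff]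
        exact ⟨ha.1.1, ha.2⟩
      have h2' : (T.filter (fun a => a - d ∉ A')).card ≤ (A \ A').card := by
        apply Finset.card_le_card_of_injOn (fun a => a - d)
        · intro a ha
          simp only [hTdef, mem_filter, mem_coe] at ha
          simp only [mem_sdiff, mem_coe]
          exact ⟨ha.1.2, ha.2⟩
        · intro x _ y _ h
          simpa using h
      calc (T \ S).card ≤ _ := card_le_card hsub
        _ ≤ _ := card_union_le _ _
        _ ≤ 2 * (A \ A').card := by omega
    have hparts := Finset.card_sdiff_add_card_eq_card hST
    have hr := hDr d hd
    have heqc : ((T \ S).card:ℝ) + (S.card:ℝ) = (rrep A d : ℝ) := by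
      rw [← hTcard]
      exact_mod_cast hparts
    have h2 : ((T \ S).card:ℝ) ≤ 2*(((A \ A').card):ℝ) := by exact_mod_cast hTS
    linarith [hrem]
  have hadd : ∀ d₁ ∈ D, ∀ d₂ ∈ D, d₁ + d₂ ∈ D := by
    intro d₁ h₁ d₂ h₂
    have h₂' := hDneg d₂ h₂
    have hc₁ := hSd d₁ h₁
    have hc₂ := hSd (-d₂) h₂'
    set S₁ := A'.filter (fun a => a - d₁ ∈ A') with hS₁
    set S₂ := A'.filter (fun a => a - (-d₂) ∈ A') with hS₂
    have hinter : (S₁ ∩ S₂).Nonempty := by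
      rw [← Finset.card_pos]
      have h := card_union_add_card_inter S₁ S₂
      have hu : (S₁ ∪ S₂).card ≤ A.card :=
        card_le_card (union_subset ((filter_subset _ _).trans hA'sub)
          ((filter_subset _ _).trans hA'sub))
      have h' : ((S₁ ∪ S₂).card:ℝ) + ((S₁ ∩ S₂).card:ℝ) = (S₁.card:ℝ) + (S₂.card:ℝ) := by
        exact_mod_cast h
      have hu' : ((S₁ ∪ S₂).card:ℝ) ≤ n := by
        rw [hn]; exact_mod_cast hu
      have hpos : (0:ℝ) < ((S₁ ∩ S₂).card:ℝ) := by
        nlinarith [mul_nonneg (show (0:ℝ) ≤ 1/100 - ε by linarith) hnpos.le]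
      exact_mod_cast hpos
    obtain ⟨a, ha⟩ := hinter
    simp only [hS₁, hS₂, mem_inter, mem_filter] at ha
    obtain ⟨⟨haA, h1⟩, _, h2⟩ := ha
    refine mem_image.mpr ⟨(a - (-d₂), a - d₁), mem_product.mpr ⟨h2, h1⟩, by show a - -d₂ - (a - d₁) = d₁ + d₂; abel⟩
  set H : AddSubgroup G :=
    { carrier := ↑D
      zero_mem' := Finset.mem_coe.mpr hD0
      add_mem' := fun {x y} hx hy =>
        Finset.mem_coe.mpr (hadd x (Finset.mem_coe.mp hx) y (Finset.mem_coe.mp hy))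
      neg_mem' := fun {x} hx => Finset.mem_coe.mpr (hDneg x (Finset.mem_coe.mp hx)) } with hH
  refine ⟨H, -a₀, D.finite_toSet, ?_⟩
  set X : Finset G := D.image (fun d => d + a₀) with hX
  have himg : (fun h => h - (-a₀)) '' (H : Set G) = ↑X := by
    ext x
    simp only [Set.mem_image, hX, coe_image, sub_neg_eq_add]
    constructor
    · rintro ⟨d, hd, rfl⟩
      exact ⟨d, Finset.mem_coe.mp hd, rfl⟩
    · rintro ⟨d, hd, rfl⟩
      exact ⟨d, Finset.mem_coe.mpr hd, rfl⟩
  rw [himg]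
  have hXcard : X.card = D.card := card_image_of_injective _ (add_left_injective a₀)
  have hA'X : A' ⊆ X := by
    intro a ha
    refine mem_image.mpr ⟨a - a₀, ?_, by abel⟩
    exact mem_image.mpr ⟨(a, a₀), mem_product.mpr ⟨ha, ha₀⟩, rfl⟩
  have hsd : symmDiff U (↑X : Set G) = ↑((A \ X) ∪ (X \ A)) := by
    rw [hUA, Set.symmDiff_def]
    simp [Finset.coe_union, Finset.coe_sdiff]
  rw [hsd, Set.ncard_coe_finset]
  have hcard1 : ((A \ X).card : ℝ) ≤ 10*ε*n := by
    have hsub : A \ X ⊆ A \ A' := sdiff_subset_sdiff (Finset.Subset.refl A) hA'X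
    have := card_le_card hsub
    calc ((A \ X).card : ℝ) ≤ ((A \ A').card : ℝ) := by exact_mod_cast this
      _ ≤ 10*ε*n := hrem
  have hcard2 : ((X \ A).card : ℝ) ≤ (1+4*ε)*n - (n - 10*ε*n) := by
    have hsub : X \ A ⊆ X \ A' := sdiff_subset_sdiff (Finset.Subset.refl X) hA'sub
    have h := Finset.card_sdiff_add_card_eq_card hA'X
    have h' : ((X \ A').card : ℝ) + (A'.card:ℝ) = (X.card:ℝ) := by exact_mod_cast h
    have hXc : (X.card:ℝ) ≤ (1+4*ε)*n := by
      have hXc' : ((X.card : ℕ):ℝ) = ((D.card : ℕ):ℝ) := by exact_mod_cast hXcard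
      rw [hXc']
      exact hDcard
    have h2 : ((X \ A).card:ℝ) ≤ ((X \ A').card:ℝ) := by exact_mod_cast card_le_card hsub
    linarith
  have htot : (((A \ X) ∪ (X \ A)).card : ℝ) ≤ 24*ε*n := by
    have h := card_union_le (A \ X) (X \ A)
    have h' : (((A \ X) ∪ (X \ A)).card : ℝ) ≤ ((A \ X).card:ℝ) + ((X \ A).card:ℝ) := by
      exact_mod_cast h
    linarith
  rw [hUn]
  have hfin : 24*ε*n = 168 * κ ^ ((1:ℝ)/12) * n := by rw [hε]; ring
  have : (0:ℝ) < κ ^ ((1:ℝ)/12) * n := mul_pos hκ12pos hnpos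
  calc (((A \ X) ∪ (X \ A)).card : ℝ) ≤ 24*ε*n := htot
    _ = 168 * κ ^ ((1:ℝ)/12) * n := hfin
    _ < 1000 * κ ^ ((1:ℝ)/12) * n := by nlinarith
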